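/- Let E be a regular sublinear expectation on the space X of bounded measurable real-valued functions on (Ω, F), with upper capacity C(A) := E(1_A). A sequence {ξ_n}_{n≥1} ⊂ X converges in capacity to some random variable ξ (i.e. for all ε, δ > 0 there exists N such that C({|ξ_n − ξ| > ε}) < δ for all n ≥ N) if and only if it is a Cauchy sequence in capacity (i.e. for all ε, δ > 0 there exists N such that C({|ξ_n − ξ_m| > ε}) < δ for all m, n ≥ N). -/

import Mathlib

open MeasureTheory Set Filter Topology Classical

/-- The space of bounded measurable real-valued functions on `Ω`, as a submodule of `Ω → ℝ`. -/
def BM (Ω : Type*) [MeasurableSpace Ω] : Submodule ℝ (Ω → ℝ) where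
  carrier := {f | Measurable f ∧ ∃ M : ℝ, ∀ ω, |f ω| ≤ M}
  zero_mem' := ⟨measurable_const, 0, by simp⟩
  add_mem' := by
    rintro f g ⟨hf, Mf, hMf⟩ ⟨hg, Mg, hMg⟩
    exact ⟨hf.add hg, Mf + Mg, fun ω => (abs_add_le _ _).trans (add_le_add (hMf ω) (hMg ω))⟩
  smul_mem' := by
    rintro c f ⟨hf, Mf, hMf⟩
    refine ⟨hf.const_smul c, |c| * Mf, fun ω => ?_⟩
    simp only [Pi.smul_apply, smul_eq_mul, abs_mul]
    exact mul_le_mul_of_nonneg_left (hMf ω) (abs_nonneg c)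

variable {Ω : Type*} [MeasurableSpace Ω]

lemma mem_BM {f : Ω → ℝ} (hf : Measurable f) (M : ℝ) (hM : ∀ ω, |f ω| ≤ M) : f ∈ BM Ω :=
  ⟨hf, M, hM⟩

lemma BM.measurable (ξ : BM Ω) : Measurable (ξ : Ω → ℝ) := ξ.2.1

lemma BM.bounded (ξ : BM Ω) : ∃ M : ℝ, ∀ ω, |(ξ : Ω → ℝ) ω| ≤ M := ξ.2.2

/-- A sublinear expectation on the space of bounded measurable functions. -/
structure SLE (Ω : Type*) [MeasurableSpace Ω] where
  E : BM Ω → ℝ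
  mono : ∀ ξ η : BM Ω, (∀ ω, (η : Ω → ℝ) ω ≤ (ξ : Ω → ℝ) ω) → E η ≤ E ξ
  const_preserve : ∀ (c : ℝ) (h : (fun _ : Ω => c) ∈ BM Ω), E ⟨fun _ => c, h⟩ = c
  subadd : ∀ ξ η : BM Ω, E (ξ + η) ≤ E ξ + E η
  pos_homog : ∀ (c : ℝ), 0 ≤ c → ∀ ξ : BM Ω, E (c • ξ) = c * E ξ

/-- The constant function as an element of `BM Ω`. -/
def constBM (Ω : Type*) [MeasurableSpace Ω] (c : ℝ) : BM Ω :=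
  ⟨fun _ => c, mem_BM measurable_const |c| fun _ => le_refl _⟩

/-- The indicator function of a measurable set as an element of `BM Ω`. -/
noncomputable def indBM {Ω : Type*} [MeasurableSpace Ω] (A : Set Ω) (hA : MeasurableSet A) : BM Ω :=
  ⟨A.indicator fun _ => 1,
    mem_BM (measurable_const.indicator hA) 1 fun ω => by
      by_cases h : ω ∈ A <;> simp [Set.indicator_apply, h]⟩

/-- The product of two bounded measurable functions. -/
noncomputable def mulBM (ξ η : BM Ω) : BM Ω := by
  refine ⟨fun ω => (ξ : Ω → ℝ) ω * (η : Ω → ℝ) ω, ?_⟩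
  obtain ⟨Mf, hMf⟩ := BM.bounded ξ
  obtain ⟨Mg, hMg⟩ := BM.bounded η
  refine mem_BM ((BM.measurable ξ).mul (BM.measurable η)) (max Mf 0 * max Mg 0) fun ω => ?_
  rw [abs_mul]
  exact mul_le_mul ((hMf ω).trans (le_max_left _ _)) ((hMg ω).trans (le_max_left _ _))
    (abs_nonneg _) (le_max_right _ _)

/-- The upper capacity associated to a sublinear expectation: `C(A) = E(1_A)` for measurable `A`
(junk value `0` on non-measurable sets). -/
noncomputable def SLE.cap (𝔼 : SLE Ω) (A : Set Ω) : ℝ :=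
  if h : MeasurableSet A then 𝔼.E (indBM A h) else 0

/-- The lower capacity associated to a sublinear expectation: `c(A) = -E(-1_A)` for measurable `A`
(junk value `0` on non-measurable sets). -/
noncomputable def SLE.lcap (𝔼 : SLE Ω) (A : Set Ω) : ℝ :=
  if h : MeasurableSet A then -𝔼.E (-(indBM A h)) else 0

/-- A linear expectation dominated by the sublinear expectation `𝔼`. -/
def Dominated (𝔼 : SLE Ω) (L : BM Ω →ₗ[ℝ] ℝ) : Prop := ∀ ξ : BM Ω, L ξ ≤ 𝔼.E ξ

/-- `ξ` and `η` are uncorrelated with respect to `𝔼` if `L(ξη) = L(ξ)L(η)` for every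
linear expectation `L` dominated by `𝔼`. -/
def Uncorrelated (𝔼 : SLE Ω) (ξ η : BM Ω) : Prop :=
  ∀ L : BM Ω →ₗ[ℝ] ℝ, Dominated 𝔼 L → L (mulBM ξ η) = L ξ * L η

/-- `𝔼` is regular: if `ξ n ↓ 0` pointwise then `𝔼.E (ξ n) ↓ 0`. -/
def SLE.Regular (𝔼 : SLE Ω) : Prop :=
  ∀ ξ : ℕ → BM Ω, (∀ ω, Antitone fun n => (ξ n : Ω → ℝ) ω) →
    (∀ ω, Tendsto (fun n => (ξ n : Ω → ℝ) ω) atTop (𝓝 0)) →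
    Tendsto (fun n => 𝔼.E (ξ n)) atTop (𝓝 0)

/-- The σ-field generated by `ξ a, …, ξ b`. -/
def sigmaGen (ξ : ℕ → BM Ω) (a b : ℕ) : MeasurableSpace Ω :=
  ⨆ i ∈ Set.Icc a b, MeasurableSpace.comap (fun ω => (ξ i : Ω → ℝ) ω) inferInstance

/-- `{ξ_n}_{n ≥ 1}` is an independent sequence under `𝔼`: pairwise uncorrelated, and
`C(A ∩ B) ≤ C(A) C(B)` whenever `A ∈ σ(ξ_1, …, ξ_m)` and `B ∈ σ(ξ_{m+1}, …, ξ_n)`, `m < n`. -/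
def IndepSeq (𝔼 : SLE Ω) (ξ : ℕ → BM Ω) : Prop :=
  (∀ i j, 1 ≤ i → 1 ≤ j → i ≠ j → Uncorrelated 𝔼 (ξ i) (ξ j)) ∧
  ∀ m n : ℕ, 1 ≤ m → m < n → ∀ A B : Set Ω,
    MeasurableSet[sigmaGen ξ 1 m] A → MeasurableSet[sigmaGen ξ (m + 1) n] B →
    𝔼.cap (A ∩ B) ≤ 𝔼.cap A * 𝔼.cap B

/-- Assumption (H₀): for every disjoint measurable cover `{A_n}` of `Ω`,
the series `Σ C(A_n)` has bounded partial sums. -/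
def H0 (𝔼 : SLE Ω) : Prop :=
  ∀ A : ℕ → Set Ω, (∀ n, MeasurableSet (A n)) → Pairwise (Function.onFun Disjoint A) →
    (⋃ n, A n) = Set.univ → ∃ M : ℝ, ∀ N : ℕ, ∑ n ∈ Finset.range N, 𝔼.cap (A n) < M
section Helpers
variable (𝔼 : SLE Ω)

lemma SLE.E_zero : 𝔼.E 0 = 0 :=
  𝔼.const_preserve 0 ((BM Ω).zero_mem)

lemma SLE.E_nonneg (η : BM Ω) (h : ∀ ω, 0 ≤ (η : Ω → ℝ) ω) : 0 ≤ 𝔼.E η := by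
  have := 𝔼.mono η 0 (by simpa using h)
  rwa [𝔼.E_zero] at this

lemma SLE.cap_eq {A : Set Ω} (h : MeasurableSet A) : 𝔼.cap A = 𝔼.E (indBM A h) := by
  simp [SLE.cap, h]

lemma indBM_apply {A : Set Ω} (h : MeasurableSet A) (ω : Ω) :
    (indBM A h : Ω → ℝ) ω = A.indicator (fun _ => 1) ω := rfl

lemma SLE.cap_nonneg (A : Set Ω) : 0 ≤ 𝔼.cap A := by
  by_cases h : MeasurableSet A
  · rw [𝔼.cap_eq h]
    exact 𝔼.E_nonneg _ fun ω => Set.indicator_nonneg (fun _ _ => zero_le_one) ω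
  · simp [SLE.cap, h]

lemma SLE.cap_mono {A B : Set Ω} (hA : MeasurableSet A) (hB : MeasurableSet B)
    (hAB : A ⊆ B) : 𝔼.cap A ≤ 𝔼.cap B := by
  rw [𝔼.cap_eq hA, 𝔼.cap_eq hB]
  exact 𝔼.mono _ _ fun ω =>
    Set.indicator_le_indicator_of_subset hAB (fun _ => zero_le_one) ω

lemma SLE.cap_union_le {A B : Set Ω} (hA : MeasurableSet A) (hB : MeasurableSet B) :
    𝔼.cap (A ∪ B) ≤ 𝔼.cap A + 𝔼.cap B := by
  rw [𝔼.cap_eq (hA.union hB), 𝔼.cap_eq hA, 𝔼.cap_eq hB]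
  refine le_trans (𝔼.mono (indBM A hA + indBM B hB) _ fun ω => ?_) (𝔼.subadd _ _)
  simp only [indBM_apply, Submodule.coe_add, Pi.add_apply]
  by_cases h1 : ω ∈ A <;> by_cases h2 : ω ∈ B <;>
    simp [Set.indicator_apply, h1, h2]

lemma SLE.E_sum_le (f : ℕ → BM Ω) (N : ℕ) :
    𝔼.E (∑ i ∈ Finset.range N, f i) ≤ ∑ i ∈ Finset.range N, 𝔼.E (f i) := by
  induction N with
  | zero => simp [𝔼.E_zero]
  | succ n ih =>
    rw [Finset.sum_range_succ, Finset.sum_range_succ]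
    exact le_trans (𝔼.subadd _ _) (add_le_add_left ih _)

end Helpers
lemma SLE.cap_iUnion_le (𝔼 : SLE Ω) (hreg : 𝔼.Regular) (A : ℕ → Set Ω)
    (hA : ∀ n, MeasurableSet (A n)) (S : ℝ)
    (hS : ∀ N : ℕ, ∑ n ∈ Finset.range N, 𝔼.cap (A n) ≤ S) :
    𝔼.cap (⋃ n, A n) ≤ S := by
  set U : Set Ω := ⋃ n, A n with hUdef
  have hU : MeasurableSet U := MeasurableSet.iUnion hA
  set s : ℕ → Ω → ℝ := fun N ω => ∑ n ∈ Finset.range N, (A n).indicator (fun _ => (1:ℝ)) ω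
    with hsdef
  have hsmeas : ∀ N, Measurable (s N) := fun N =>
    Finset.measurable_sum _ fun n _ => measurable_const.indicator (hA n)
  have hsnonneg : ∀ N ω, 0 ≤ s N ω := fun N ω =>
    Finset.sum_nonneg fun n _ => Set.indicator_nonneg (fun _ _ => zero_le_one) ω
  have hsmono : ∀ ω, Monotone fun N => s N ω := by
    intro ω M N hMN
    exact Finset.sum_le_sum_of_subset_of_nonneg (Finset.range_subset_range.2 hMN)
      (fun n _ _ => Set.indicator_nonneg (fun _ _ => zero_le_one) ω)
  have hind01 : ∀ ω, U.indicator (fun _ => (1:ℝ)) ω ≤ 1 := by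
    intro ω; by_cases h : ω ∈ U <;> simp [Set.indicator_apply, h]
  -- the excess functions
  have Fmem : ∀ N, (fun ω => max (U.indicator (fun _ => (1:ℝ)) ω - s N ω) 0) ∈ BM Ω := by
    intro N
    refine mem_BM (((measurable_const.indicator hU).sub (hsmeas N)).max measurable_const) 1
      fun ω => ?_
    rw [abs_of_nonneg (le_max_right _ _)]
    exact max_le (by linarith [hind01 ω, hsnonneg N ω]) zero_le_one
  set F : ℕ → BM Ω := fun N => ⟨_, Fmem N⟩ with hFdef
  have hFanti : ∀ ω, Antitone fun N => (F N : Ω → ℝ) ω := by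
    intro ω M N hMN
    exact max_le_max (by linarith [hsmono ω hMN]) le_rfl
  have hFtend : ∀ ω, Tendsto (fun N => (F N : Ω → ℝ) ω) atTop (𝓝 0) := by
    intro ω
    by_cases h : ω ∈ U
    · obtain ⟨j, hj⟩ := Set.mem_iUnion.mp h
      have : ∀ N ≥ j + 1, (F N : Ω → ℝ) ω = 0 := by
        intro N hN
        have h1 : (1:ℝ) ≤ s N ω := by
          have := Finset.single_le_sum
            (f := fun n => (A n).indicator (fun _ => (1:ℝ)) ω)
            (fun n _ => Set.indicator_nonneg (fun _ _ => zero_le_one) ω)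
            (Finset.mem_range.2 (Nat.lt_of_succ_le hN))
          simpa [Set.indicator_of_mem hj] using this
        exact max_eq_right (by linarith [hind01 ω])
      exact tendsto_atTop_of_eventually_const (x := (0:ℝ)) (i₀ := j + 1) (fun N hN => this N hN)
    · have : ∀ N, (F N : Ω → ℝ) ω = 0 := fun N =>
        max_eq_right (by simp [Set.indicator_of_notMem h, hsnonneg N ω])
      have h0 : (fun N => (F N : Ω → ℝ) ω) = fun _ => (0:ℝ) := funext this
      rw [h0]
      exact tendsto_const_nhds
  have hFlim := hreg F hFanti hFtend
  -- key inequality for each N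
  have key : ∀ N, 𝔼.cap U ≤ 𝔼.E (F N) + S := by
    intro N
    set G : BM Ω := ∑ n ∈ Finset.range N, indBM (A n) (hA n) with hGdef
    have hGcoe : ∀ ω, (G : Ω → ℝ) ω = s N ω := by
      intro ω
      rw [hGdef]
      simp [indBM_apply, hsdef]
    have h1 : 𝔼.cap U ≤ 𝔼.E (F N + G) := by
      rw [𝔼.cap_eq hU]
      refine 𝔼.mono _ _ fun ω => ?_
      simp only [Submodule.coe_add, Pi.add_apply, hGcoe, indBM_apply]
      have : U.indicator (fun _ => (1:ℝ)) ω - s N ω ≤ (F N : Ω → ℝ) ω := le_max_left _ _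
      linarith
    refine h1.trans ((𝔼.subadd _ _).trans (add_le_add_right ?_ _))
    refine le_trans (𝔼.E_sum_le _ N) ?_
    calc ∑ n ∈ Finset.range N, 𝔼.E (indBM (A n) (hA n))
        = ∑ n ∈ Finset.range N, 𝔼.cap (A n) := by
          refine Finset.sum_congr rfl fun n _ => ?_
          rw [𝔼.cap_eq (hA n)]
      _ ≤ S := hS N
  have : Tendsto (fun N => 𝔼.E (F N) + S) atTop (𝓝 (0 + S)) :=
    hFlim.add tendsto_const_nhds
  have := ge_of_tendsto this (Filter.Eventually.of_forall key)
  linarith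
lemma measSet_abs_sub {f g : Ω → ℝ} (hf : Measurable f) (hg : Measurable g) (ε : ℝ) :
    MeasurableSet {ω | ε < |f ω - g ω|} :=
  measurableSet_lt measurable_const ((hf.sub hg).abs)

/-- Under a regular sublinear expectation, a sequence converges in capacity to
some random variable iff it is Cauchy in capacity. -/
theorem convergence_in_capacity_iff_cauchy (𝔼 : SLE Ω) (hreg : 𝔼.Regular) (ξ : ℕ → BM Ω) :
    (∃ ξ₀ : Ω → ℝ, Measurable ξ₀ ∧ ∀ ε > 0, ∀ δ > 0, ∃ N : ℕ, ∀ n ≥ N,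
        𝔼.cap {ω | ε < |(ξ n : Ω → ℝ) ω - ξ₀ ω|} < δ) ↔
    (∀ ε > 0, ∀ δ > 0, ∃ N : ℕ, ∀ m ≥ N, ∀ n ≥ N,
        𝔼.cap {ω | ε < |(ξ n : Ω → ℝ) ω - (ξ m : Ω → ℝ) ω|} < δ) := by
  constructor
  · rintro ⟨ξ₀, hξ₀m, hconv⟩ ε hε δ hδ
    obtain ⟨N, hNp⟩ := hconv (ε/2) (by linarith) (δ/2) (by linarith)
    refine ⟨N, fun m hm n hn => ?_⟩
    have hsub : {ω | ε < |(ξ n : Ω → ℝ) ω - (ξ m : Ω → ℝ) ω|} ⊆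
        {ω | ε/2 < |(ξ n : Ω → ℝ) ω - ξ₀ ω|} ∪ {ω | ε/2 < |(ξ m : Ω → ℝ) ω - ξ₀ ω|} := by
      intro ω hω
      simp only [Set.mem_setOf_eq] at hω
      by_contra hc
      simp only [Set.mem_union, Set.mem_setOf_eq, not_or, not_lt] at hc
      obtain ⟨h1, h2⟩ := hc
      have t1 := abs_sub_le ((ξ n : Ω → ℝ) ω) (ξ₀ ω) ((ξ m : Ω → ℝ) ω)
      have t2 := abs_sub_comm (ξ₀ ω) ((ξ m : Ω → ℝ) ω)
      linarith
    have m1 := measSet_abs_sub (BM.measurable (ξ n)) hξ₀m (ε/2)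
    have m2 := measSet_abs_sub (BM.measurable (ξ m)) hξ₀m (ε/2)
    calc 𝔼.cap {ω | ε < |(ξ n : Ω → ℝ) ω - (ξ m : Ω → ℝ) ω|}
        ≤ 𝔼.cap ({ω | ε/2 < |(ξ n : Ω → ℝ) ω - ξ₀ ω|} ∪ {ω | ε/2 < |(ξ m : Ω → ℝ) ω - ξ₀ ω|}) :=
          𝔼.cap_mono (measSet_abs_sub (BM.measurable (ξ n)) (BM.measurable (ξ m)) ε)
            (m1.union m2) hsub
      _ ≤ 𝔼.cap {ω | ε/2 < |(ξ n : Ω → ℝ) ω - ξ₀ ω|}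
            + 𝔼.cap {ω | ε/2 < |(ξ m : Ω → ℝ) ω - ξ₀ ω|} := 𝔼.cap_union_le m1 m2
      _ < δ := by linarith [hNp n hn, hNp m hm]
  · intro h
    have hhalf : ∀ k : ℕ, (0:ℝ) < (1/2)^k := fun k => by positivity
    choose N hN using fun k : ℕ => h ((1/2)^k) (hhalf k) ((1/2)^k) (hhalf k)
    set φ : ℕ → ℕ := fun k => Nat.rec (N 0) (fun k ih => max (ih + 1) (N (k+1))) k with hφdef
    have hφsucc : ∀ k, φ (k+1) = max (φ k + 1) (N (k+1)) := fun k => rfl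
    have hφmono : StrictMono φ := strictMono_nat_of_lt_succ fun k => by
      rw [hφsucc]; exact lt_of_lt_of_le (Nat.lt_succ_self _) (le_max_left _ _)
    have hφN : ∀ k, N k ≤ φ k := by
      intro k
      cases k with
      | zero => exact le_rfl
      | succ k => rw [hφsucc]; exact le_max_right _ _
    set a : Ω → ℕ → ℝ := fun ω j => (ξ (φ j) : Ω → ℝ) ω with hadef
    set A : ℕ → Set Ω := fun k => {ω | (1/2)^k < |a ω (k+1) - a ω k|} with hAdef
    have hAm : ∀ k, MeasurableSet (A k) := fun k =>
      measSet_abs_sub (BM.measurable (ξ (φ (k+1)))) (BM.measurable (ξ (φ k))) _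
    have hAcap : ∀ k, 𝔼.cap (A k) < (1/2)^k := fun k =>
      hN k (φ k) (hφN k) (φ (k+1)) ((hφN k).trans (hφmono.monotone k.le_succ))
    -- key telescoping estimate
    have est : ∀ ω k, (∀ j, k ≤ j → ω ∉ A j) →
        ∀ d, |a ω (k+d) - a ω k| ≤ 2*(1/2)^k - 2*(1/2)^(k+d) := by
      intro ω k hω d
      induction d with
      | zero => simp
      | succ d ih =>
        have h1 : |a ω (k+d+1) - a ω (k+d)| ≤ (1/2)^(k+d) := by
          have h2 := hω (k+d) (Nat.le_add_right _ _)
          simp only [hAdef, Set.mem_setOf_eq, not_lt] at h2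
          exact h2
        calc |a ω (k+(d+1)) - a ω k|
            ≤ |a ω (k+d+1) - a ω (k+d)| + |a ω (k+d) - a ω k| := by
              rw [show k+(d+1) = k+d+1 from rfl]; exact abs_sub_le _ _ _
          _ ≤ (1/2)^(k+d) + (2*(1/2)^k - 2*(1/2)^(k+d)) := add_le_add h1 ih
          _ = 2*(1/2)^k - 2*(1/2)^(k+(d+1)) := by
              rw [show k+(d+1) = k+d+1 from rfl, pow_succ]; ring
    set Conv : Set Ω := {ω | ∃ c : ℝ, Tendsto (fun j => a ω j) atTop (𝓝 c)} with hConvdef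
    have hConvm : MeasurableSet Conv :=
      MeasureTheory.measurableSet_exists_tendsto (fun j => BM.measurable (ξ (φ j)))
    set ξ₀ : Ω → ℝ := fun ω => if hc : ω ∈ Conv then hc.choose else 0 with hξ₀def
    have hξ₀spec : ∀ ω, ω ∈ Conv → Tendsto (fun j => a ω j) atTop (𝓝 (ξ₀ ω)) := by
      intro ω hω
      have : ξ₀ ω = hω.choose := by rw [hξ₀def]; exact dif_pos hω
      rw [this]
      exact hω.choose_spec
    have hξ₀m : Measurable ξ₀ := by
      have hη : ∀ j : ℕ, Measurable (fun ω => if ω ∈ Conv then a ω j else 0) := fun j =>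
        Measurable.ite hConvm (BM.measurable (ξ (φ j))) measurable_const
      refine measurable_of_tendsto_metrizable' atTop hη ?_
      rw [tendsto_pi_nhds]
      intro ω
      by_cases hω : ω ∈ Conv
      · have heq : (fun j => if ω ∈ Conv then a ω j else 0) = fun j => a ω j := by
          funext j; rw [if_pos hω]
        rw [heq]
        exact hξ₀spec ω hω
      · have heq : (fun j => if ω ∈ Conv then a ω j else 0) = fun _ => (0:ℝ) := by
          funext j; rw [if_neg hω]
        have hz : ξ₀ ω = 0 := by rw [hξ₀def]; exact dif_neg hω
        rw [heq, hz]
        exact tendsto_const_nhds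
    -- off the tail union, the subsequence converges
    have conv_of : ∀ ω k, (∀ j, k ≤ j → ω ∉ A j) → ω ∈ Conv := by
      intro ω k hω
      have hc : CauchySeq (fun d => a ω (k + d)) := by
        apply cauchySeq_of_le_geometric (1/2) ((1/2)^k) (by norm_num)
        intro d
        rw [Real.dist_eq]
        have h2 := hω (k+d) (Nat.le_add_right _ _)
        simp only [hAdef, Set.mem_setOf_eq, not_lt] at h2
        calc |a ω (k+d) - a ω (k+(d+1))| = |a ω (k+d+1) - a ω (k+d)| := by
              rw [show k+(d+1) = k+d+1 from rfl, abs_sub_comm]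
          _ ≤ (1/2)^(k+d) := h2
          _ = (1/2)^k * (1/2)^d := pow_add _ _ _
      obtain ⟨L, hL⟩ := cauchySeq_tendsto_of_complete hc
      have hL' : Tendsto (fun d => a ω (d + k)) atTop (𝓝 L) := by
        have heq : (fun d => a ω (d + k)) = fun d => a ω (k + d) :=
          funext fun d => by rw [Nat.add_comm]
        rw [heq]; exact hL
      exact ⟨L, (Filter.tendsto_add_atTop_iff_nat k).mp hL'⟩
    -- distance bound to the limit
    have dist_bound : ∀ ω k, (∀ j, k ≤ j → ω ∉ A j) → |a ω k - ξ₀ ω| ≤ 2*(1/2)^k := by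
      intro ω k hω
      have hmem := conv_of ω k hω
      have hlim := hξ₀spec ω hmem
      have htail : Tendsto (fun d => a ω (k + d)) atTop (𝓝 (ξ₀ ω)) := by
        rw [show (fun d => a ω (k + d)) = fun d => a ω (d + k) from
          funext fun d => by rw [Nat.add_comm]]
        exact (Filter.tendsto_add_atTop_iff_nat k).mpr hlim
      have htend : Tendsto (fun d => |a ω (k+d) - a ω k|) atTop (𝓝 (|ξ₀ ω - a ω k|)) :=
        (htail.sub tendsto_const_nhds).abs
      have hb := le_of_tendsto htend (Filter.Eventually.of_forall fun d =>
        (est ω k hω d).trans (sub_le_self _ (by positivity)))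
      rw [abs_sub_comm]
      exact hb
    have incl : ∀ k, {ω | 2*(1/2)^k < |a ω k - ξ₀ ω|} ⊆ ⋃ j, A (k + j) := by
      intro k ω hω
      by_contra hc
      simp only [Set.mem_iUnion, not_exists] at hc
      have hall : ∀ j, k ≤ j → ω ∉ A j := by
        intro j hj hmem
        exact hc (j - k) (by rwa [Nat.add_sub_cancel' hj])
      exact absurd (dist_bound ω k hall) (not_le.mpr hω)
    have capU : ∀ k, 𝔼.cap (⋃ j, A (k + j)) ≤ 2*(1/2)^k := by
      intro k
      refine 𝔼.cap_iUnion_le hreg _ (fun j => hAm (k+j)) _ fun M => ?_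
      calc ∑ j ∈ Finset.range M, 𝔼.cap (A (k+j))
          ≤ ∑ j ∈ Finset.range M, (1/2:ℝ)^(k+j) :=
            Finset.sum_le_sum fun j _ => (hAcap (k+j)).le
        _ = (1/2)^k * ∑ j ∈ Finset.range M, (1/2:ℝ)^j := by
            rw [Finset.mul_sum]; exact Finset.sum_congr rfl fun j _ => pow_add _ _ _
        _ ≤ (1/2)^k * 2 :=
            mul_le_mul_of_nonneg_left (sum_geometric_two_le M) (hhalf k).le
        _ = 2*(1/2)^k := by ring
    -- conclusion
    refine ⟨ξ₀, hξ₀m, ?_⟩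
    intro ε hε δ hδ
    obtain ⟨N', hN'⟩ := h (ε/2) (by linarith) (δ/2) (by linarith)
    obtain ⟨k₀, hk₀⟩ := exists_pow_lt_of_lt_one
      (show (0:ℝ) < min (ε/4) (δ/4) by positivity) (show (1/2:ℝ) < 1 by norm_num)
    set K := max k₀ N' with hKdef
    have hKk₀ : (1/2:ℝ)^K ≤ (1/2)^k₀ :=
      pow_le_pow_of_le_one (by norm_num) (by norm_num) (le_max_left _ _)
    have hmin := lt_min_iff.mp hk₀
    have h2Kε : 2*(1/2:ℝ)^K ≤ ε/2 := by nlinarith [hmin.1, hKk₀]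
    have h2Kδ : 2*(1/2:ℝ)^K < δ/2 := by nlinarith [hmin.2, hKk₀]
    have hφK : N' ≤ φ K := le_trans (le_max_right k₀ N') (hφmono.le_apply)
    refine ⟨N', fun n hn => ?_⟩
    have hsub : {ω | ε < |(ξ n : Ω → ℝ) ω - ξ₀ ω|} ⊆
        {ω | ε/2 < |(ξ n : Ω → ℝ) ω - a ω K|} ∪ {ω | 2*(1/2)^K < |a ω K - ξ₀ ω|} := by
      intro ω hω
      simp only [Set.mem_setOf_eq] at hω
      by_contra hc
      simp only [Set.mem_union, Set.mem_setOf_eq, not_or, not_lt] at hc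
      obtain ⟨h1, h2⟩ := hc
      have t1 := abs_sub_le ((ξ n : Ω → ℝ) ω) (a ω K) (ξ₀ ω)
      linarith
    have m1 : MeasurableSet {ω | ε/2 < |(ξ n : Ω → ℝ) ω - a ω K|} :=
      measSet_abs_sub (BM.measurable (ξ n)) (BM.measurable (ξ (φ K))) _
    have m2 : MeasurableSet {ω | 2*(1/2:ℝ)^K < |a ω K - ξ₀ ω|} :=
      measSet_abs_sub (BM.measurable (ξ (φ K))) hξ₀m _
    have c1 : 𝔼.cap {ω | ε/2 < |(ξ n : Ω → ℝ) ω - a ω K|} < δ/2 := hN' (φ K) hφK n hn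
    have c2 : 𝔼.cap {ω | 2*(1/2:ℝ)^K < |a ω K - ξ₀ ω|} < δ/2 := by
      refine lt_of_le_of_lt (le_trans (𝔼.cap_mono m2
        (MeasurableSet.iUnion fun j => hAm (K+j)) (incl K)) (capU K)) h2Kδ
    calc 𝔼.cap {ω | ε < |(ξ n : Ω → ℝ) ω - ξ₀ ω|}
        ≤ 𝔼.cap ({ω | ε/2 < |(ξ n : Ω → ℝ) ω - a ω K|}
            ∪ {ω | 2*(1/2)^K < |a ω K - ξ₀ ω|}) :=
          𝔼.cap_mono (measSet_abs_sub (BM.measurable (ξ n)) hξ₀m ε) (m1.union m2) hsub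
      _ ≤ _ + _ := 𝔼.cap_union_le m1 m2
      _ < δ := by linarith
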